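/- For m ≥ 3, the sequence (√((m−2)/(m−1)) e₁ + √(1/(m−1)) eₙ)_{n≥2} in ℓ₂ consists of unit vectors, does not converge weakly to 0, and is a maximizing sequence for the m-homogeneous polynomial P_m(x) = x₁^m + m x₁^{m−2} Σ_{j≥2} (j/(j+1)) x_j², i.e., |P_m| of these vectors converges to ‖P_m‖ = 2((m−2)/(m−1))^{(m−2)/2}. Hence the pair (ℓ₂, ℝ) fails the m-homogeneous polynomial weak maximizing property for m ≥ 3. -/

import Mathlib

open Filter Topology

section Aux

open scoped ENNReal

private theorem key_opt {a C u : ℝ} (ha : 0 < a) (hC : 0 < C) (hu0 : 0 ≤ u) (huC : u ≤ C) :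
    u ^ a * (C - u) ≤ (a * C / (a + 1)) ^ a * (C / (a + 1)) := by
  have ha1 : (0:ℝ) < a + 1 := by linarith
  set s := a * C / (a + 1) with hs
  have hs0 : 0 < s := by positivity
  have hCs : C - s = C / (a + 1) := by rw [hs]; field_simp <;> ring
  have hCs0 : 0 < C - s := by rw [hCs]; positivity
  rcases eq_or_lt_of_le hu0 with h | hu
  · rw [← h, Real.zero_rpow ha.ne', zero_mul]; positivity
  · set p₁ := u / s with hp₁
    set p₂ := (C - u) / (C - s) with hp₂
    have hp₁0 : 0 ≤ p₁ := by positivity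
    have hp₂0 : 0 ≤ p₂ := by
      apply div_nonneg (by linarith) hCs0.le
    have hgm : p₁ ^ (a / (a+1)) * p₂ ^ (1 / (a+1)) ≤ 1 := by
      have := Real.geom_mean_le_arith_mean2_weighted
        (w₁ := a/(a+1)) (w₂ := 1/(a+1)) (p₁ := p₁) (p₂ := p₂)
        (div_nonneg ha.le ha1.le) (by positivity) hp₁0 hp₂0
        (by field_simp)
      calc p₁ ^ (a / (a+1)) * p₂ ^ (1 / (a+1))
          ≤ a / (a+1) * p₁ + 1 / (a+1) * p₂ := this
        _ = 1 := by
            rw [hp₁, hp₂, hCs, hs]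
            field_simp
            ring
    have hpow : p₁ ^ a * p₂ ≤ 1 := by
      have h2 : (p₁ ^ (a / (a+1)) * p₂ ^ (1 / (a+1))) ^ (a + 1) ≤ 1 := by
        apply Real.rpow_le_one (by positivity) hgm ha1.le
      rw [Real.mul_rpow (by positivity) (by positivity),
        ← Real.rpow_mul hp₁0, ← Real.rpow_mul hp₂0] at h2
      rw [div_mul_cancel₀, div_mul_cancel₀, Real.rpow_one] at h2 <;>
        first | exact h2 | positivity
    have heq : u ^ a * (C - u) = s ^ a * (C - s) * (p₁ ^ a * p₂) := by
      rw [hp₁, hp₂, Real.div_rpow hu0 hs0.le]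
      field_simp
    calc u ^ a * (C - u) = s ^ a * (C - s) * (p₁ ^ a * p₂) := heq
      _ ≤ s ^ a * (C - s) * 1 := by
          apply mul_le_mul_of_nonneg_left hpow (by positivity)
      _ = s ^ a * (C / (a+1)) := by rw [mul_one, hCs]

private theorem lp2_summable_sq (x : lp (fun _ : ℕ => ℝ) 2) :
    Summable fun j => ((x : ∀ _ : ℕ, ℝ) j) ^ 2 := by
  have h := (lp.memℓp x).summable (p := 2) (by norm_num)
  have h2 : ((2:ℝ≥0∞)).toReal = (2:ℝ) := by norm_num
  rw [h2] at h
  simpa [Real.rpow_two, Real.norm_eq_abs, sq_abs] using h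

private theorem lp2_tsum_sq (x : lp (fun _ : ℕ => ℝ) 2) :
    ∑' j, ((x : ∀ _ : ℕ, ℝ) j) ^ 2 = ‖x‖ ^ 2 := by
  have h := lp.norm_rpow_eq_tsum (p := 2) (by norm_num) x
  have h2 : ((2:ℝ≥0∞)).toReal = (2:ℝ) := by norm_num
  rw [h2] at h
  simp only [Real.rpow_two, Real.norm_eq_abs, sq_abs] at h
  exact h.symm

private theorem nat_frac_tendsto :
    Tendsto (fun n : ℕ => ((n:ℝ) + 2) / ((n:ℝ) + 3)) atTop (𝓝 1) := by
  have h3 : Tendsto (fun n : ℕ => ((n:ℝ) + 3)) atTop atTop :=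
    tendsto_atTop_add_const_right _ 3 tendsto_natCast_atTop_atTop
  have h0 : Tendsto (fun n : ℕ => 1 / ((n:ℝ) + 3)) atTop (𝓝 0) := by
    simpa [one_div, Function.comp_def] using tendsto_inv_atTop_zero.comp h3
  have : Tendsto (fun n : ℕ => 1 - 1 / ((n:ℝ) + 3)) atTop (𝓝 (1 - 0)) :=
    tendsto_const_nhds.sub h0
  rw [sub_zero] at this
  refine this.congr fun n => ?_
  have : ((n:ℝ) + 3) ≠ 0 := by positivity
  field_simp
  ring

end Aux

/-- for `m ≥ 3`, the sequence `√((m−2)/(m−1)) e₁ + √(1/(m−1)) eₙ` (written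
0-indexed, with second index running over `n ≥ 1`) consists of unit vectors, does not
converge weakly to `0`, and is a maximizing sequence for
`P_m(x) = x₁^m + m x₁^{m−2} Σ_{j≥2} (j/(j+1)) x_j²`, whose norm is
`2((m−2)/(m−1))^{(m−2)/2}`. -/
theorem Pm_maximizing_sequence (m : ℕ) (hm : 3 ≤ m)
    (P : lp (fun _ : ℕ => ℝ) 2 → ℝ)
    (hP : ∀ x, P x = ((x : ∀ _ : ℕ, ℝ) 0) ^ m +
      (m : ℝ) * ((x : ∀ _ : ℕ, ℝ) 0) ^ (m - 2) *
        ∑' i : ℕ, (((i : ℝ) + 2) / ((i : ℝ) + 3)) * ((x : ∀ _ : ℕ, ℝ) (i + 1)) ^ 2)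
    (u : ℕ → lp (fun _ : ℕ => ℝ) 2)
    (hu : ∀ n, u n = Real.sqrt (((m : ℝ) - 2) / ((m : ℝ) - 1)) • lp.single 2 0 (1 : ℝ) +
      Real.sqrt (1 / ((m : ℝ) - 1)) • lp.single 2 (n + 1) (1 : ℝ)) :
    (∀ n, ‖u n‖ = 1) ∧
    (¬ ∀ f : lp (fun _ : ℕ => ℝ) 2 →L[ℝ] ℝ, Tendsto (fun n => f (u n)) atTop (𝓝 0)) ∧
    sSup {c : ℝ | ∃ x, ‖x‖ = 1 ∧ c = |P x|} =
      2 * (((m : ℝ) - 2) / ((m : ℝ) - 1)) ^ (((m : ℝ) - 2) / 2) ∧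
    Tendsto (fun n => |P (u n)|) atTop
      (𝓝 (2 * (((m : ℝ) - 2) / ((m : ℝ) - 1)) ^ (((m : ℝ) - 2) / 2))) := by
  have h2m : (2:ℕ) ≤ m := by omega
  set k : ℝ := (m:ℝ) with hk
  have hk3 : (3:ℝ) ≤ k := by rw [hk]; exact_mod_cast hm
  have hk1 : (0:ℝ) < k - 1 := by linarith
  have hk2 : (0:ℝ) < k - 2 := by linarith
  set s : ℝ := (k - 2) / (k - 1) with hsdef
  have hs0 : 0 < s := div_pos hk2 hk1
  have hs1 : s < 1 := (div_lt_one hk1).2 (by linarith)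
  set α : ℝ := Real.sqrt s with hαdef
  set β : ℝ := Real.sqrt (1 / (k - 1)) with hβdef
  have hα0 : 0 < α := Real.sqrt_pos.2 hs0
  have hβ0 : 0 < β := Real.sqrt_pos.2 (by positivity)
  have hα2 : α ^ 2 = s := Real.sq_sqrt hs0.le
  have hβ2 : β ^ 2 = 1 / (k - 1) := Real.sq_sqrt (by positivity)
  set c : ℝ := s ^ ((k - 2) / 2) with hcdef
  have hc0 : 0 < c := Real.rpow_pos_of_pos hs0 _
  -- coordinates of u n
  have hcoord : ∀ n j, (u n : ∀ _ : ℕ, ℝ) j =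
      (if j = 0 then α else 0) + (if j = n + 1 then β else 0) := by
    intro n j
    rw [hu n, lp.coeFn_add, lp.coeFn_smul, lp.coeFn_smul]
    simp only [Pi.add_apply, Pi.smul_apply, smul_eq_mul, lp.single_apply]
    by_cases h0 : j = 0 <;> by_cases h1 : j = n + 1 <;> simp [h0, h1]
  have hc0' : ∀ n, (u n : ∀ _ : ℕ, ℝ) 0 = α := by
    intro n; rw [hcoord]; simp
  have hcs : ∀ n i, (u n : ∀ _ : ℕ, ℝ) (i + 1) = if i = n then β else 0 := by
    intro n i; rw [hcoord]; simp
  -- unit norm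
  have hnorm : ∀ n, ‖u n‖ = 1 := by
    intro n
    have hts : ∑' j, ((u n : ∀ _ : ℕ, ℝ) j) ^ 2 = 1 := by
      have hzero : ∀ j ∉ ({0, n + 1} : Finset ℕ),
          ((u n : ∀ _ : ℕ, ℝ) j) ^ 2 = 0 := by
        intro j hj
        simp only [Finset.mem_insert, Finset.mem_singleton, not_or] at hj
        rw [hcoord]
        simp [hj.1, hj.2]
      rw [tsum_eq_sum hzero, Finset.sum_pair (by omega : (0:ℕ) ≠ n + 1)]
      rw [hcoord, hcoord]
      simp only [if_neg (by omega : ¬(0:ℕ) = n + 1), if_neg (by omega : ¬n + 1 = 0)]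
      simp only [if_true, eq_self_iff_true, add_zero, zero_add, if_pos]
      rw [hα2, hβ2, hsdef]
      field_simp
      ring
    have h1 : ‖u n‖ ^ 2 = 1 := by rw [← lp2_tsum_sq, hts]
    have := Real.sqrt_sq (norm_nonneg (u n))
    rw [h1] at this
    simpa using this.symm
  -- power identities
  have hrp : ∀ t : ℝ, 0 ≤ t → t ^ (m - 2) = (t ^ 2) ^ ((k - 2) / 2) := by
    intro t ht
    have hc2 : ((m - 2 : ℕ) : ℝ) = k - 2 := by
      rw [hk]; push_cast [Nat.cast_sub h2m]; ring
    rw [← Real.rpow_natCast t (m - 2), hc2, ← Real.rpow_natCast t 2,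
      ← Real.rpow_mul ht]
    congr 1
    push_cast
    ring
  have hαm2 : α ^ (m - 2) = c := by rw [hrp α hα0.le, hα2]
  have hαm : α ^ m = c * s := by
    have hm2 : m = (m - 2) + 2 := by omega
    rw [hm2, pow_add, hαm2, hα2]
  -- value of P on u n
  have hPu : ∀ n, P (u n) = c * s + k * c * (1 / (k - 1)) * (((n:ℝ) + 2) / ((n:ℝ) + 3)) := by
    intro n
    rw [hP (u n), hc0' n]
    have ht : (∑' i : ℕ, ((i:ℝ) + 2) / ((i:ℝ) + 3) * ((u n : ∀ _ : ℕ, ℝ) (i + 1)) ^ 2)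
        = ((n:ℝ) + 2) / ((n:ℝ) + 3) * β ^ 2 := by
      rw [tsum_eq_single n ?_]
      · rw [hcs]; simp
      · intro b hb; rw [hcs]; simp [hb]
    rw [ht, hαm, hαm2, hβ2]
    ring
  have hPn : ∀ n, |P (u n)| = c * s + k * c * (1 / (k - 1)) * (((n:ℝ) + 2) / ((n:ℝ) + 3)) := by
    intro n
    rw [hPu n, abs_of_nonneg]
    have h1 : (0:ℝ) ≤ ((n:ℝ) + 2) / ((n:ℝ) + 3) := by positivity
    have h2 : (0:ℝ) ≤ 1 / (k - 1) := (one_div_nonneg).2 hk1.le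
    have h3 : (0:ℝ) ≤ k := by linarith
    exact add_nonneg (mul_pos hc0 hs0).le
      (mul_nonneg (mul_nonneg (mul_nonneg h3 hc0.le) h2) h1)
  have htend : Tendsto (fun n => |P (u n)|) atTop (𝓝 (2 * c)) := by
    have h := (nat_frac_tendsto.const_mul (k * c * (1 / (k - 1)))).const_add (c * s)
    have heq : c * s + k * c * (1 / (k - 1)) * 1 = 2 * c := by
      have h1 : k - 1 ≠ 0 := ne_of_gt hk1
      rw [hsdef]; field_simp; ring
    rw [heq] at h
    exact h.congr fun n => (hPn n).symm
  -- upper bound on unit sphere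
  have hub : ∀ x : lp (fun _ : ℕ => ℝ) 2, ‖x‖ = 1 → |P x| ≤ 2 * c := by
    intro x hx
    set y : ∀ _ : ℕ, ℝ := (x : ∀ _ : ℕ, ℝ) with hy
    have hsq : Summable fun j => (y j) ^ 2 := lp2_summable_sq x
    have htot : ∑' j, (y j) ^ 2 = 1 := by rw [lp2_tsum_sq x, hx]; norm_num
    have hsq' : Summable fun i => (y (i + 1)) ^ 2 := hsq.comp_injective (add_left_injective 1)
    have hsplit : (y 0) ^ 2 + ∑' i, (y (i + 1)) ^ 2 = 1 := by
      rw [← hsq.tsum_eq_zero_add]; exact htot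
    have htail0 : 0 ≤ ∑' i, (y (i + 1)) ^ 2 := tsum_nonneg fun i => sq_nonneg _
    have hwle : ∀ i : ℕ, ((i:ℝ) + 2) / ((i:ℝ) + 3) * (y (i + 1)) ^ 2 ≤ (y (i + 1)) ^ 2 := by
      intro i
      apply mul_le_of_le_one_left (sq_nonneg _)
      rw [div_le_one (by positivity)]
      linarith [show (0:ℝ) ≤ (i:ℝ) from Nat.cast_nonneg i]
    have hsumw : Summable fun i : ℕ => ((i:ℝ) + 2) / ((i:ℝ) + 3) * (y (i + 1)) ^ 2 :=
      Summable.of_nonneg_of_le (fun i => by positivity) hwle hsq'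
    set S := ∑' i : ℕ, ((i:ℝ) + 2) / ((i:ℝ) + 3) * (y (i + 1)) ^ 2 with hS
    have hS0 : 0 ≤ S := tsum_nonneg fun i => by positivity
    have hSle : S ≤ 1 - (y 0) ^ 2 := by
      have h := Summable.tsum_le_tsum hwle hsumw hsq'
      rw [← hS] at h
      linarith
    set t := |y 0| with htdef
    have ht0 : 0 ≤ t := abs_nonneg _
    have ht2 : t ^ 2 = (y 0) ^ 2 := sq_abs _
    have ht1 : t ^ 2 ≤ 1 := by rw [ht2]; linarith
    have hb1 : |P x| ≤ t ^ m + k * t ^ (m - 2) * S := by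
      rw [hP x, ← hy, ← hS]
      refine (abs_add_le _ _).trans ?_
      have e1 : |(y 0) ^ m| = t ^ m := by rw [abs_pow]
      have e2 : |k * (y 0) ^ (m - 2) * S| ≤ k * t ^ (m - 2) * S := by
        rw [abs_mul, abs_mul, abs_pow, abs_of_nonneg (show (0:ℝ) ≤ k by linarith),
          abs_of_nonneg hS0]
      rw [e1]
      linarith
    have hb2 : t ^ m + k * t ^ (m - 2) * S ≤ t ^ m + k * t ^ (m - 2) * (1 - t ^ 2) := by
      have hkt : 0 ≤ k * t ^ (m - 2) := mul_nonneg (by linarith) (pow_nonneg ht0 _)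
      have hS' : S ≤ 1 - t ^ 2 := by rw [ht2]; exact hSle
      have := mul_le_mul_of_nonneg_left hS' hkt
      linarith
    have hb3 : t ^ m + k * t ^ (m - 2) * (1 - t ^ 2) ≤ 2 * c := by
      set a := (k - 2) / 2 with ha
      have ha0 : 0 < a := div_pos hk2 two_pos
      set C := k / (k - 1) with hC
      have hC0 : 0 < C := div_pos (by linarith) hk1
      have hC1 : 1 ≤ C := (le_div_iff₀ hk1).2 (by linarith)
      set uu := t ^ 2 with huu
      have huu0 : 0 ≤ uu := by rw [huu]; positivity
      have huuC : uu ≤ C := le_trans ht1 hC1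
      have hrw : t ^ (m - 2) = uu ^ a := by rw [huu, ha]; exact hrp t ht0
      have hmm : t ^ m = uu ^ a * uu := by
        have hm2 : m = (m - 2) + 2 := by omega
        rw [hm2, pow_add, hrw, huu]
      have key := key_opt ha0 hC0 huu0 huuC
      have hkne : k ≠ 0 := by linarith
      have hk1ne : k - 1 ≠ 0 := ne_of_gt hk1
      have e1 : a * C / (a + 1) = s := by
        rw [ha, hC, hsdef]; field_simp; ring
      have e2 : C / (a + 1) = 2 / (k - 1) := by
        rw [ha, hC]; field_simp; ring
      have e3 : s ^ a = c := hcdef.symm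
      rw [e1, e2, e3] at key
      have expand : t ^ m + k * t ^ (m - 2) * (1 - t ^ 2) = (k - 1) * (uu ^ a * (C - uu)) := by
        rw [hmm, hrw, hC]
        field_simp
        ring
      rw [expand]
      calc (k - 1) * (uu ^ a * (C - uu)) ≤ (k - 1) * (c * (2 / (k - 1))) :=
            mul_le_mul_of_nonneg_left key hk1.le
        _ = 2 * c := by field_simp
    calc |P x| ≤ t ^ m + k * t ^ (m - 2) * S := hb1
      _ ≤ t ^ m + k * t ^ (m - 2) * (1 - t ^ 2) := hb2
      _ ≤ 2 * c := hb3
  refine ⟨hnorm, ?_, ?_, htend⟩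
  · -- not weakly null
    intro h
    have h1 := h (innerSL ℝ (lp.single 2 0 (1:ℝ)))
    have h2 : ∀ n, (innerSL ℝ (lp.single 2 0 (1:ℝ))) (u n) = α := by
      intro n
      have : (inner ℝ (lp.single 2 0 (1:ℝ)) (u n) : ℝ) = (u n : ∀ _ : ℕ, ℝ) 0 := by
        rw [lp.inner_single_left]; simp [RCLike.inner_apply]
      rw [hc0' n] at this
      exact this
    rw [tendsto_congr h2] at h1
    have := tendsto_nhds_unique h1 tendsto_const_nhds
    exact hα0.ne' this.symm
  · -- the sSup
    have hbdd : BddAbove {c' : ℝ | ∃ x, ‖x‖ = 1 ∧ c' = |P x|} := by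
      refine ⟨2 * c, ?_⟩
      rintro y ⟨x, hx1, rfl⟩
      exact hub x hx1
    apply le_antisymm
    · apply Real.sSup_le
      · rintro y ⟨x, hx1, rfl⟩
        exact hub x hx1
      · linarith [hc0]
    · refine le_of_tendsto htend (Eventually.of_forall fun n => ?_)
      exact le_csSup hbdd ⟨u n, hnorm n, rfl⟩
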